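/- arXiv:0902.1646 — 7 statements merged into one kernel-verified Lean document; each statement's English description precedes it below -/
import Mathlib

section
/- Let X be a Banach space with a Schauder basis (e_n), and suppose K ⊆ X^* is a 1-norming set contained in the span of the biorthogonal functionals such that K·K ⊆ C_2·B_{X^*}, where the product of f = ∑ a_i e_i^* and g = ∑ b_i e_i^* is defined coordinatewise as f·g = ∑ a_i b_i e_i^*. Then the norm of X^* is submultiplicative with constant C_2 on finitely supported functionals: ‖∑_{i=1}^n a_i b_i e_i^*‖ ≤ C_2 · ‖∑_{i=1}^n a_i e_i^*‖ · ‖∑_{i=1}^n b_i e_i^*‖. -/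
open Finset

/-- If `K ⊆ X^*` is a 1-norming set contained in the span of the biorthogonal
functionals of a Schauder basis `(e n)` of `X`, and the coordinatewise product
of any two members of `K` lies in `C₂ • B_{X^*}`, then the dual norm is
submultiplicative with constant `C₂` on finitely supported functionals. -/
theorem stmt2 {X : Type*} [NormedAddCommGroup X] [NormedSpace ℝ X] [CompleteSpace X]
    (e : ℕ → X) (es : ℕ → X →L[ℝ] ℝ) (C₂ : ℝ) (hC₂ : 0 < C₂)
    (hbi : ∀ n m, es n (e m) = if n = m then 1 else 0)
    (K : Set (X →L[ℝ] ℝ))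
    -- K is contained in the unit ball of X^*
    (hKball : ∀ f ∈ K, ‖f‖ ≤ 1)
    -- K is 1-norming
    (hKnorming : ∀ x : X, ∀ ε > (0:ℝ), ∃ f ∈ K, ‖x‖ ≤ |f x| + ε)
    -- K is contained in the linear span of the biorthogonal functionals
    (hKspan : ∀ f ∈ K, ∃ n : ℕ, f = ∑ i ∈ range n, f (e i) • es i)
    -- K · K ⊆ C₂ • B_{X^*} : every coordinatewise product of members of K
    -- has norm at most C₂
    (hKprod : ∀ f ∈ K, ∀ g ∈ K, ∀ n : ℕ,
      ‖∑ i ∈ range n, (f (e i) * g (e i)) • es i‖ ≤ C₂) :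
    ∀ (n : ℕ) (a b : ℕ → ℝ),
      ‖∑ i ∈ range n, (a i * b i) • es i‖ ≤
        C₂ * ‖∑ i ∈ range n, a i • es i‖ * ‖∑ i ∈ range n, b i • es i‖ := by
  intro n a b
  have eval : ∀ c d : ℕ → ℝ,
      (∑ i ∈ range n, c i • es i) (∑ j ∈ range n, d j • e j) =
        ∑ i ∈ range n, c i * d i := by
    intro c d
    rw [ContinuousLinearMap.sum_apply]
    refine Finset.sum_congr rfl fun i hi => ?_
    have h1 : es i (∑ j ∈ range n, d j • e j) = d i := by
      rw [map_sum]
      simp only [map_smul, hbi, smul_eq_mul, mul_ite, mul_one, mul_zero]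
      rw [Finset.sum_ite_eq]
      simp [Finset.mem_range.mp hi]
    simp only [ContinuousLinearMap.smul_apply, smul_eq_mul]
    rw [h1]
  refine ContinuousLinearMap.opNorm_le_bound _ (by positivity) fun x => ?_
  refine le_of_forall_pos_le_add fun ε hε => ?_
  set D : ℝ := ‖∑ i ∈ range n, a i • es i‖ * (‖∑ i ∈ range n, b i • es i‖ + 1) with hD
  have hD0 : 0 ≤ D := by positivity
  set δ : ℝ := ε / (D + 1) with hδ
  have hδ0 : 0 < δ := by positivity
  set y : X := ∑ j ∈ range n, (b j * es j x) • e j with hy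
  obtain ⟨f, hfK, hfy⟩ := hKnorming y δ hδ0
  set z : X := ∑ j ∈ range n, (f (e j) * es j x) • e j with hz
  obtain ⟨g, hgK, hgz⟩ := hKnorming z δ hδ0
  -- the product bound
  have hgz' : |g z| ≤ C₂ * ‖x‖ := by
    have h1 : g z = (∑ i ∈ range n, (f (e i) * g (e i)) • es i) x := by
      rw [hz, map_sum]
      simp only [map_smul, smul_eq_mul, ContinuousLinearMap.sum_apply,
        ContinuousLinearMap.smul_apply]
      exact Finset.sum_congr rfl fun i _ => by ring
    rw [h1, ← Real.norm_eq_abs]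
    calc ‖(∑ i ∈ range n, (f (e i) * g (e i)) • es i) x‖
        ≤ ‖∑ i ∈ range n, (f (e i) * g (e i)) • es i‖ * ‖x‖ :=
          ContinuousLinearMap.le_opNorm _ x
      _ ≤ C₂ * ‖x‖ :=
          mul_le_mul_of_nonneg_right (hKprod f hfK g hgK n) (norm_nonneg x)
  have hz' : ‖z‖ ≤ C₂ * ‖x‖ + δ := hgz.trans (by linarith)
  -- f y = G z
  have hfyG : f y = (∑ i ∈ range n, b i • es i) z := by
    rw [hy, hz, map_sum, eval b (fun j => f (e j) * es j x)]
    simp only [map_smul, smul_eq_mul]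
    exact Finset.sum_congr rfl fun i _ => by ring
  have hfy' : |f y| ≤ ‖∑ i ∈ range n, b i • es i‖ * (C₂ * ‖x‖ + δ) := by
    rw [hfyG, ← Real.norm_eq_abs]
    calc ‖(∑ i ∈ range n, b i • es i) z‖
        ≤ ‖∑ i ∈ range n, b i • es i‖ * ‖z‖ := ContinuousLinearMap.le_opNorm _ z
      _ ≤ ‖∑ i ∈ range n, b i • es i‖ * (C₂ * ‖x‖ + δ) :=
          mul_le_mul_of_nonneg_left hz' (norm_nonneg _)
  have hy' : ‖y‖ ≤ ‖∑ i ∈ range n, b i • es i‖ * (C₂ * ‖x‖ + δ) + δ :=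
    hfy.trans (by linarith)
  -- H x = F y
  have hHxy : (∑ i ∈ range n, (a i * b i) • es i) x =
      (∑ i ∈ range n, a i • es i) y := by
    rw [hy, eval a (fun j => b j * es j x)]
    simp only [ContinuousLinearMap.sum_apply, ContinuousLinearMap.smul_apply,
      smul_eq_mul]
    exact Finset.sum_congr rfl fun i _ => by ring
  have h2 : ‖(∑ i ∈ range n, (a i * b i) • es i) x‖ ≤
      ‖∑ i ∈ range n, a i • es i‖ * ‖y‖ := by
    rw [hHxy]; exact ContinuousLinearMap.le_opNorm _ y
  have step : ‖∑ i ∈ range n, a i • es i‖ * ‖y‖ ≤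
      ‖∑ i ∈ range n, a i • es i‖ *
        (‖∑ i ∈ range n, b i • es i‖ * (C₂ * ‖x‖ + δ) + δ) :=
    mul_le_mul_of_nonneg_left hy' (norm_nonneg _)
  have hexp : ‖∑ i ∈ range n, a i • es i‖ *
      (‖∑ i ∈ range n, b i • es i‖ * (C₂ * ‖x‖ + δ) + δ) =
      C₂ * ‖∑ i ∈ range n, a i • es i‖ * ‖∑ i ∈ range n, b i • es i‖ * ‖x‖ +
        D * δ := by
    rw [hD]; ring
  have hεeq : δ * (D + 1) = ε := by
    rw [hδ]; field_simp
  have hDδ : D * δ ≤ ε := by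
    have h3 : δ * D ≤ δ * (D + 1) :=
      mul_le_mul_of_nonneg_left (by linarith) hδ0.le
    linarith [h3.trans_eq hεeq, mul_comm D δ]
  linarith
end

section
/- Let X be a Banach space with a normalized monotone Schauder basis (e_n) such that the basis dominates the summing basis with constant C_1 and the norm of X^* is submultiplicative with constant C_2 on finitely supported functionals. If for scalars (λ_n) there is M > 0 with ‖∑_{i=n}^m λ_i e_i^*‖ ≤ M for all n ≤ m, then for every x = ∑ μ_i e_i in X the partial sums ∑_{i=1}^n λ_i μ_i e_i form a Cauchy sequence in X; i.e., the diagonal operator with entries (λ_n) is well defined and bounded. -/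
open Finset Filter

/-- If `X` has a normalized monotone Schauder basis dominating the summing
basis with constant `C₁`, the dual norm is submultiplicative with constant
`C₂`, and the partial sums `∑_{i=n}^m λ_i e_i^*` are uniformly bounded by `M`,
then for every `x = ∑ μ_i e_i` the partial sums `∑_{i<n} λ_i μ_i e_i` form a
Cauchy sequence; i.e. the diagonal operator with entries `(λ_n)` is well
defined and bounded. -/
theorem stmt3 {X : Type*} [NormedAddCommGroup X] [NormedSpace ℝ X] [CompleteSpace X]
    (e : ℕ → X) (es : ℕ → X →L[ℝ] ℝ) (C₁ C₂ : ℝ) (hC₁ : 0 < C₁) (hC₂ : 0 < C₂)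
    (hbi : ∀ n m, es n (e m) = if n = m then 1 else 0)
    (hnormal : ∀ n, ‖e n‖ = 1)
    (hmono : ∀ (x : X) (n : ℕ), ‖∑ i ∈ range n, es i x • e i‖ ≤ ‖x‖)
    (hexp : ∀ x : X,
      Tendsto (fun n => ∑ i ∈ range n, es i x • e i) atTop (nhds x))
    (hdom : ∀ (n : ℕ) (μ : ℕ → ℝ),
      C₁ * |∑ i ∈ range n, μ i| ≤ ‖∑ i ∈ range n, μ i • e i‖)
    (hsub : ∀ (n : ℕ) (a b : ℕ → ℝ),
      ‖∑ i ∈ range n, (a i * b i) • es i‖ ≤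
        C₂ * ‖∑ i ∈ range n, a i • es i‖ * ‖∑ i ∈ range n, b i • es i‖)
    (lam : ℕ → ℝ) (M : ℝ) (hM : 0 < M)
    (hbdd : ∀ n m : ℕ, n ≤ m → ‖∑ i ∈ Finset.Icc n m, lam i • es i‖ ≤ M) :
    ∀ x : X, CauchySeq (fun n => ∑ i ∈ range n, (lam i * es i x) • e i) := by
  intro x
  set S : ℕ → X := fun n => ∑ i ∈ range n, es i x • e i with hS
  set T : ℕ → X := fun n => ∑ i ∈ range n, (lam i * es i x) • e i with hT
  have hScauchy : CauchySeq S := (hexp x).cauchySeq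
  -- coordinate functionals on partial sums
  have hes : ∀ (i k : ℕ), es i (S k) = if i < k then es i x else 0 := by
    intro i k
    have h1 : es i (S k) = ∑ j ∈ range k, es j x * es i (e j) := by
      simp [hS, map_sum, map_smul, smul_eq_mul]
    rw [h1]
    have h2 : ∀ j ∈ range k, es j x * es i (e j) = if i = j then es j x else 0 := by
      intro j _
      rw [hbi]
      by_cases h : i = j <;> simp [h]
    rw [Finset.sum_congr rfl h2, Finset.sum_ite_eq]
    simp [Finset.mem_range]
  -- key estimate
  have key : ∀ n m : ℕ, n ≤ m → ‖T m - T n‖ ≤ C₂ * M * ‖S m - S n‖ := by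
    intro n m hnm
    rcases eq_or_lt_of_le hnm with rfl | hlt
    · simp
    have hTd : T m - T n = ∑ i ∈ Finset.Ico n m, (lam i * es i x) • e i := by
      rw [hT, Finset.sum_Ico_eq_sub _ hnm]
    by_cases hy : T m - T n = 0
    · rw [hy, norm_zero]
      positivity
    obtain ⟨f, hf1, hfy⟩ := exists_dual_vector ℝ (T m - T n) (norm_ne_zero_iff.mpr hy)
    set a : ℕ → ℝ := fun i => if n ≤ i then lam i else 0 with ha_def
    set b : ℕ → ℝ := fun i => f (e i) with hb_def
    have ha : ∑ i ∈ range m, a i • es i = ∑ i ∈ Finset.Ico n m, lam i • es i := by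
      rw [range_eq_Ico, ← Finset.sum_Ico_consecutive _ (Nat.zero_le n) hnm]
      have h1 : ∑ i ∈ Finset.Ico 0 n, a i • es i = 0 :=
        Finset.sum_eq_zero fun i hi => by
          simp [ha_def, Nat.not_le.mpr (Finset.mem_Ico.mp hi).2]
      rw [h1, zero_add]
      exact Finset.sum_congr rfl fun i hi => by simp [ha_def, (Finset.mem_Ico.mp hi).1]
    have haM : ‖∑ i ∈ range m, a i • es i‖ ≤ M := by
      rw [ha]
      have hIco : Finset.Ico n m = Finset.Icc n (m - 1) := by
        rw [← Finset.Ico_add_one_right_eq_Icc]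
        congr 1
        omega
      rw [hIco]
      exact hbdd n (m - 1) (Nat.le_pred_of_lt hlt)
    have hb1 : ‖∑ i ∈ range m, b i • es i‖ ≤ 1 := by
      apply ContinuousLinearMap.opNorm_le_bound _ zero_le_one
      intro z
      have h1 : (∑ i ∈ range m, b i • es i) z = f (∑ i ∈ range m, es i z • e i) := by
        simp only [ContinuousLinearMap.coe_sum', Finset.sum_apply,
          ContinuousLinearMap.coe_smul', Pi.smul_apply, map_sum, map_smul, smul_eq_mul, hb_def]
        exact Finset.sum_congr rfl fun i _ => mul_comm _ _
      rw [h1, one_mul]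
      calc ‖f (∑ i ∈ range m, es i z • e i)‖ ≤ ‖f‖ * ‖∑ i ∈ range m, es i z • e i‖ :=
            f.le_opNorm _
        _ ≤ ‖z‖ := by rw [hf1, one_mul]; exact hmono z m
    have hg : ‖∑ i ∈ range m, (a i * b i) • es i‖ ≤ C₂ * M := by
      calc ‖∑ i ∈ range m, (a i * b i) • es i‖ ≤
            C₂ * ‖∑ i ∈ range m, a i • es i‖ * ‖∑ i ∈ range m, b i • es i‖ := hsub m a b
        _ ≤ C₂ * M * 1 := by
            apply mul_le_mul
            · exact mul_le_mul_of_nonneg_left haM hC₂.le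
            · exact hb1
            · exact norm_nonneg _
            · positivity
        _ = C₂ * M := mul_one _
    -- evaluate g on S m - S n
    have hgz : (∑ i ∈ range m, (a i * b i) • es i) (S m - S n) = ‖T m - T n‖ := by
      have h1 : (∑ i ∈ range m, (a i * b i) • es i) (S m - S n)
          = ∑ i ∈ range m, (a i * b i) * (es i (S m) - es i (S n)) := by
        simp [ContinuousLinearMap.coe_sum', Finset.sum_apply, map_sub, smul_eq_mul, mul_sub,
          Finset.sum_sub_distrib]
      rw [h1]
      have h2 : ∑ i ∈ range m, (a i * b i) * (es i (S m) - es i (S n))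
          = ∑ i ∈ Finset.Ico n m, (lam i * es i x) * f (e i) := by
        rw [range_eq_Ico, ← Finset.sum_Ico_consecutive _ (Nat.zero_le n) hnm]
        have hz : ∑ i ∈ Finset.Ico 0 n, (a i * b i) * (es i (S m) - es i (S n)) = 0 :=
          Finset.sum_eq_zero fun i hi => by
            simp [ha_def, Nat.not_le.mpr (Finset.mem_Ico.mp hi).2]
        rw [hz, zero_add]
        refine Finset.sum_congr rfl fun i hi => ?_
        obtain ⟨hni, him⟩ := Finset.mem_Ico.mp hi
        rw [hes, hes, if_pos him, if_neg (Nat.not_lt.mpr hni), sub_zero]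
        simp [ha_def, hb_def, hni]
        ring
      rw [h2]
      have h3 : f (T m - T n) = ∑ i ∈ Finset.Ico n m, (lam i * es i x) * f (e i) := by
        rw [hTd, map_sum]
        exact Finset.sum_congr rfl fun i _ => by rw [map_smul, smul_eq_mul]
      rw [← h3, hfy]
      norm_cast
    have : ‖T m - T n‖ ≤ ‖∑ i ∈ range m, (a i * b i) • es i‖ * ‖S m - S n‖ := by
      rw [← hgz]
      exact le_trans (le_abs_self _) ((∑ i ∈ range m, (a i * b i) • es i).le_opNorm _)
    calc ‖T m - T n‖ ≤ ‖∑ i ∈ range m, (a i * b i) • es i‖ * ‖S m - S n‖ := this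
      _ ≤ C₂ * M * ‖S m - S n‖ := mul_le_mul_of_nonneg_right hg (norm_nonneg _)
  -- conclude Cauchy
  have keyd : ∀ m n : ℕ, dist (T m) (T n) ≤ C₂ * M * dist (S m) (S n) := by
    intro m n
    rcases le_total n m with h | h
    · rw [dist_eq_norm, dist_eq_norm]; exact key n m h
    · rw [dist_comm (T m), dist_comm (S m), dist_eq_norm, dist_eq_norm]; exact key m n h
  rw [Metric.cauchySeq_iff]
  intro ε hε
  have hCM : 0 < C₂ * M := by positivity
  obtain ⟨N, hN⟩ := Metric.cauchySeq_iff.mp hScauchy (ε / (C₂ * M)) (by positivity)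
  refine ⟨N, fun m hm n hn => ?_⟩
  calc dist (T m) (T n) ≤ C₂ * M * dist (S m) (S n) := keyd m n
    _ < C₂ * M * (ε / (C₂ * M)) := by
        exact mul_lt_mul_of_pos_left (hN m hm n hn) hCM
    _ = ε := by field_simp
end

section
/- In the space c of convergent sequences with the summing basis (s_n), the set K = {± ∑_{i=1}^n s_i^* : n ∈ ℕ} is a 1-norming set, and K·K ⊆ K ∪ {0} (the coordinatewise product of two elements of K again lies in K up to sign or is zero); consequently the norm of c^* is submultiplicative with constant 1 with respect to the summing basis coordinates. -/
open Finset

/-- The coordinates of `x = ∑ μ_i s_i` (summing basis of `c`) give the sequence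
`k ↦ ∑_{i ≤ k} μ_i`; its sup norm is the norm of `x` in `c`. -/
noncomputable def pSum (μ : ℕ → ℝ) (k : ℕ) : ℝ := ∑ i ∈ range (k + 1), μ i

/-- The norm of `∑ μ_i s_i` in the space `c` of convergent sequences. -/
noncomputable def cNorm (μ : ℕ → ℝ) : ℝ := ⨆ k, |pSum μ k|

/-- The dual norm of the finitely supported functional `∑_{i<n} c_i s_i^*`,
computed against the summing-basis norm on `c`. -/
noncomputable def dualNormC (c : ℕ → ℝ) (n : ℕ) : ℝ :=
  sSup {r | ∃ μ : ℕ → ℝ, (∃ N, ∀ i, N ≤ i → μ i = 0) ∧ cNorm μ ≤ 1 ∧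
    r = |∑ i ∈ range n, c i * μ i|}

lemma pSum_const {μ : ℕ → ℝ} {N : ℕ} (hN : ∀ i, N ≤ i → μ i = 0) {k : ℕ} (hk : N ≤ k) :
    pSum μ k = pSum μ N := by
  unfold pSum
  refine (Finset.sum_subset (by simpa using Nat.succ_le_succ hk) ?_).symm
  intro i _ hi
  exact hN i (le_of_lt (by simpa using hi))

lemma bddA {μ : ℕ → ℝ} {N : ℕ} (hN : ∀ i, N ≤ i → μ i = 0) :
    BddAbove (Set.range fun k => |pSum μ k|) := by
  apply Set.Finite.bddAbove
  apply Set.Finite.subset ((Set.finite_Iic N).image fun k => |pSum μ k|)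
  rintro y ⟨k, rfl⟩
  rcases le_or_gt k N with h | h
  · exact ⟨k, h, rfl⟩
  · exact ⟨N, le_refl N, by simp only []; rw [pSum_const hN h.le]⟩

lemma abs_pSum_le {μ : ℕ → ℝ} {N : ℕ} (hN : ∀ i, N ≤ i → μ i = 0) (h1 : cNorm μ ≤ 1) (k : ℕ) :
    |pSum μ k| ≤ 1 :=
  le_trans (le_ciSup (bddA hN) k) h1

lemma abs_partial_le {μ : ℕ → ℝ} {N : ℕ} (hN : ∀ i, N ≤ i → μ i = 0) (h1 : cNorm μ ≤ 1)
    (t : ℕ) : |∑ i ∈ range t, μ i| ≤ 1 := by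
  cases t with
  | zero => simp
  | succ u => exact abs_pSum_le hN h1 u

lemma filter_range (a b : ℕ) : (range a).filter (· < b) = range (min a b) := by
  ext i; simp [lt_min_iff]

lemma sum_ite_swap (f : ℕ → ℝ) (a b : ℕ) :
    ∑ i ∈ range a, (if i < b then f i else 0) = ∑ i ∈ range b, (if i < a then f i else 0) := by
  rw [← Finset.sum_filter, ← Finset.sum_filter, filter_range, filter_range, min_comm]

lemma setBdd (c : ℕ → ℝ) (n : ℕ) :
    BddAbove {r | ∃ μ : ℕ → ℝ, (∃ N, ∀ i, N ≤ i → μ i = 0) ∧ cNorm μ ≤ 1 ∧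
      r = |∑ i ∈ range n, c i * μ i|} := by
  refine ⟨∑ i ∈ range n, |c i| * 2, ?_⟩
  rintro r ⟨μ, ⟨N, hN⟩, h1, rfl⟩
  have hμ : ∀ i, |μ i| ≤ 2 := by
    intro i
    cases i with
    | zero =>
      have h0 : |μ 0| ≤ 1 := by simpa [pSum] using abs_pSum_le hN h1 0
      linarith
    | succ u =>
      have h2 : μ (u + 1) = pSum μ (u + 1) - pSum μ u := by
        simp [pSum, Finset.sum_range_succ]
      rw [h2]
      have := abs_pSum_le hN h1 (u + 1)
      have := abs_pSum_le hN h1 u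
      calc |pSum μ (u+1) - pSum μ u| ≤ |pSum μ (u+1)| + |pSum μ u| := abs_sub _ _
        _ ≤ 2 := by linarith
  calc |∑ i ∈ range n, c i * μ i| ≤ ∑ i ∈ range n, |c i * μ i| := Finset.abs_sum_le_sum_abs _ _
    _ ≤ ∑ i ∈ range n, |c i| * 2 := by
        refine Finset.sum_le_sum fun i _ => ?_
        rw [abs_mul]
        exact mul_le_mul_of_nonneg_left (hμ i) (abs_nonneg _)

lemma dualNonneg (c : ℕ → ℝ) (n : ℕ) : 0 ≤ dualNormC c n := by
  apply Real.sSup_nonneg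
  rintro r ⟨μ, _, _, rfl⟩
  exact abs_nonneg _

lemma cNorm_nonneg_of {μ : ℕ → ℝ} {N : ℕ} (hN : ∀ i, N ≤ i → μ i = 0) : 0 ≤ cNorm μ :=
  le_trans (abs_nonneg _) (le_ciSup (bddA hN) 0)

/-- In the space `c` with the summing basis, the set
`K = {± ∑_{i=1}^n s_i^*}` (whose elements act as `μ ↦ ± pSum μ k`) is
1-norming, `K·K ⊆ K ∪ {0}` (coordinatewise products: the coefficient sequence
of `± ∑_{i<n} s_i^*` is `± χ_{[0,n)}`, and the product of two such is again of
this form), and consequently the dual norm is submultiplicative with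
constant 1. -/
theorem stmt4 :
    -- K is 1-norming for c
    (∀ μ : ℕ → ℝ, (∃ N, ∀ i, N ≤ i → μ i = 0) → ∀ ε > (0:ℝ),
      ∃ (k : ℕ) (s : ℝ), (s = 1 ∨ s = -1) ∧ cNorm μ ≤ s * pSum μ k + ε) ∧
    -- K·K ⊆ K ∪ {0}: the coordinatewise product of the coefficient sequences
    -- of two members of K is again (a sign times) such a coefficient sequence
    (∀ n m : ℕ, ∀ s t : ℝ, (s = 1 ∨ s = -1) → (t = 1 ∨ t = -1) →
      (s * t = 1 ∨ s * t = -1) ∧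
      ((fun i => (if i < n then s else 0) * (if i < m then t else 0)) =
        fun i => if i < min n m then s * t else 0)) ∧
    -- consequently the dual norm is submultiplicative with constant 1
    (∀ (n : ℕ) (a b : ℕ → ℝ),
      dualNormC (fun i => a i * b i) n ≤ dualNormC a n * dualNormC b n) := by
  refine ⟨?_, ?_, ?_⟩
  · -- Part 1: 1-norming
    rintro μ ⟨N, hN⟩ ε hε
    obtain ⟨k₀, hk₀mem, hk₀⟩ := Finset.exists_max_image (range (N + 1))
      (fun k => |pSum μ k|) ⟨0, by simp⟩
    have hmax : ∀ k, |pSum μ k| ≤ |pSum μ k₀| := by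
      intro k
      rcases le_or_gt k N with h | h
      · exact hk₀ k (by simp [Nat.lt_succ_iff, h])
      · rw [pSum_const hN h.le]
        exact hk₀ N (by simp)
    have hcn : cNorm μ ≤ |pSum μ k₀| := ciSup_le hmax
    refine ⟨k₀, if 0 ≤ pSum μ k₀ then 1 else -1, ?_, ?_⟩
    · split_ifs <;> simp
    · have : (if 0 ≤ pSum μ k₀ then (1:ℝ) else -1) * pSum μ k₀ = |pSum μ k₀| := by
        split_ifs with h
        · rw [one_mul, abs_of_nonneg h]
        · rw [abs_of_neg (not_le.mp h)]; ring
      rw [this]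
      linarith
  · -- Part 2: K·K ⊆ K ∪ {0}
    intro n m s t hs ht
    constructor
    · rcases hs with rfl | rfl <;> rcases ht with rfl | rfl <;> simp
    · funext i
      by_cases h1 : i < n <;> by_cases h2 : i < m <;> simp [h1, h2, lt_min_iff]
  · -- Part 3: submultiplicativity
    intro n a b
    have hB0 := dualNonneg b n
    have hA0 := dualNonneg a n
    apply Real.sSup_le _ (mul_nonneg hA0 hB0)
    rintro r ⟨μ, ⟨N, hN⟩, h1, rfl⟩
    set ν : ℕ → ℝ := fun i => if i < n then b i * μ i else 0 with hν
    have hνfs : ∀ i, n ≤ i → ν i = 0 := fun i hi => if_neg (not_lt.mpr hi)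
    -- each partial sum of ν is bounded by dualNormC b n
    have hνb : ∀ k, |pSum ν k| ≤ dualNormC b n := by
      intro k
      set μ'' : ℕ → ℝ := fun i => if i < k + 1 then μ i else 0 with hμ''
      have hfs'' : ∀ i, k + 1 ≤ i → μ'' i = 0 := fun i hi => if_neg (not_lt.mpr hi)
      have hcn'' : cNorm μ'' ≤ 1 := by
        apply ciSup_le
        intro j
        have : pSum μ'' j = ∑ i ∈ range (min (j + 1) (k + 1)), μ i := by
          rw [pSum, ← filter_range, Finset.sum_filter]
        rw [this]
        exact abs_partial_le hN h1 _
      have hps : pSum ν k = ∑ i ∈ range n, b i * μ'' i := by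
        rw [pSum]
        have e1 : ∀ i ∈ range (k + 1), ν i = (if i < n then b i * μ i else 0) := fun i _ => rfl
        rw [Finset.sum_congr rfl e1, sum_ite_swap (fun i => b i * μ i) (k + 1) n]
        refine Finset.sum_congr rfl fun i _ => ?_
        simp only [hμ'', mul_ite, mul_zero]
      rw [hps]
      exact le_csSup (setBdd b n) ⟨μ'', ⟨k + 1, hfs''⟩, hcn'', rfl⟩
    have hsum : ∑ i ∈ range n, (a i * b i) * μ i = ∑ i ∈ range n, a i * ν i := by
      refine Finset.sum_congr rfl fun i hi => ?_
      rw [hν]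
      simp only [if_pos (mem_range.mp hi)]
      ring
    rw [hsum]
    rcases eq_or_lt_of_le hB0 with hB | hB
    · -- dualNormC b n = 0 forces ν = 0
      have hν0 : ∀ i, ν i = 0 := by
        have hz : ∀ k, pSum ν k = 0 := by
          intro k
          have := hνb k
          rw [← hB] at this
          exact abs_eq_zero.mp (le_antisymm this (abs_nonneg _))
        intro i
        cases i with
        | zero => simpa [pSum] using hz 0
        | succ u =>
          have h2 : ν (u + 1) = pSum ν (u + 1) - pSum ν u := by
            simp [pSum, Finset.sum_range_succ]
          rw [h2, hz, hz, sub_zero]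
      have : ∑ i ∈ range n, a i * ν i = 0 := by
        refine Finset.sum_eq_zero fun i _ => ?_
        rw [hν0 i, mul_zero]
      rw [this, ← hB, mul_zero, abs_zero]
    · -- dualNormC b n > 0 : rescale
      set dB := dualNormC b n
      set ν' : ℕ → ℝ := fun i => ν i / dB with hν'
      have hfs' : ∀ i, n ≤ i → ν' i = 0 := fun i hi => by
        simp only [hν', hνfs i hi, zero_div]
      have hpν' : ∀ k, pSum ν' k = pSum ν k / dB := by
        intro k; rw [pSum, pSum, ← Finset.sum_div]
      have hcn' : cNorm ν' ≤ 1 := by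
        apply ciSup_le
        intro k
        rw [hpν', abs_div, abs_of_pos hB, div_le_one hB]
        exact hνb k
      have hmem : |∑ i ∈ range n, a i * ν' i| ≤ dualNormC a n :=
        le_csSup (setBdd a n) ⟨ν', ⟨n, hfs'⟩, hcn', rfl⟩
      have hsc : ∑ i ∈ range n, a i * ν i = dB * ∑ i ∈ range n, a i * ν' i := by
        rw [Finset.mul_sum]
        refine Finset.sum_congr rfl fun i _ => ?_
        rw [hν']
        field_simp
      rw [hsc, abs_mul, abs_of_pos hB]
      calc dB * |∑ i ∈ range n, a i * ν' i| ≤ dB * dualNormC a n :=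
            mul_le_mul_of_nonneg_left hmem hB.le
        _ = dualNormC a n * dB := mul_comm _ _
end

section
/- Let 𝒮 be the collection of all finite intervals of ℕ together with all finite segments of the dyadic tree (under the identification of ℕ with the dyadic tree via the bijection h). Then 𝒮 is closed under pairwise intersections: for A, B ∈ 𝒮, A ∩ B ∈ 𝒮. -/
/-- The partial order of the dyadic tree transported to `ℕ` via the standard
bijection `h(ε₁…ε_n) = 2ⁿ + ∑ ε_j 2^{n-j}` (so the children of `a` are `2a`
and `2a+1`): `a ⪯ b` iff `a ≥ 1` and the binary expansion of `a` is an
initial segment of that of `b`. -/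
def treeLE (a b : ℕ) : Prop := 1 ≤ a ∧ ∃ k : ℕ, b / 2 ^ k = a

/-- A (finite) segment of the dyadic tree: a set of the form
`{γ : α ⪯ γ ⪯ β}`. -/
def IsTreeSegment (A : Set ℕ) : Prop :=
  ∃ α β : ℕ, treeLE α β ∧ A = {γ | treeLE α γ ∧ treeLE γ β}

/-- A (finite) interval of `ℕ`. -/
def IsNatInterval (A : Set ℕ) : Prop := ∃ a b : ℕ, A = Set.Icc a b

lemma treeLE_le {a b : ℕ} (h : treeLE a b) : a ≤ b := by
  obtain ⟨h1, k, hk⟩ := h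
  subst hk
  exact Nat.div_le_self _ _

lemma treeLE_refl {a : ℕ} (h : 1 ≤ a) : treeLE a a := ⟨h, 0, by simp⟩

lemma treeLE_trans {a b c : ℕ} (hab : treeLE a b) (hbc : treeLE b c) : treeLE a c := by
  obtain ⟨h1, j, hj⟩ := hab
  obtain ⟨h2, k, hk⟩ := hbc
  exact ⟨h1, k + j, by rw [pow_add, ← Nat.div_div_eq_div_mul, hk, hj]⟩

lemma treeLE_total {a b c : ℕ} (hac : treeLE a c) (hbc : treeLE b c) :
    treeLE a b ∨ treeLE b a := by
  obtain ⟨h1, j, hj⟩ := hac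
  obtain ⟨h2, k, hk⟩ := hbc
  rcases le_total j k with h | h
  · right
    exact ⟨h2, k - j, by rw [← hj, Nat.div_div_eq_div_mul, ← pow_add,
      Nat.add_sub_cancel' h, hk]⟩
  · left
    exact ⟨h1, j - k, by rw [← hk, Nat.div_div_eq_div_mul, ← pow_add,
      Nat.add_sub_cancel' h, hj]⟩

lemma segment_of_chain {S : Set ℕ} {β : ℕ}
    (hsub : ∀ γ ∈ S, treeLE γ β)
    (hconv : ∀ γ1 γ2 γ, γ1 ∈ S → γ2 ∈ S → treeLE γ1 γ → treeLE γ γ2 → γ ∈ S)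
    (hne : S.Nonempty) : IsTreeSegment S := by
  have hbdd : BddAbove S := ⟨β, fun γ hγ => treeLE_le (hsub γ hγ)⟩
  set α' := sInf S with hα'
  set β' := sSup S with hβ'
  have hα : α' ∈ S := Nat.sInf_mem hne
  have hβ : β' ∈ S := Nat.sSup_mem hne hbdd
  have key : ∀ γ ∈ S, treeLE α' γ ∧ treeLE γ β' := by
    intro γ hγ
    constructor
    · rcases treeLE_total (hsub α' hα) (hsub γ hγ) with h | h
      · exact h
      · have heq : γ = α' := le_antisymm (treeLE_le h) (Nat.sInf_le hγ)
        rw [heq]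
        exact treeLE_refl (hsub α' hα).1
    · rcases treeLE_total (hsub γ hγ) (hsub β' hβ) with h | h
      · exact h
      · have heq : β' = γ := le_antisymm (treeLE_le h) (le_csSup hbdd hγ)
        rw [← heq]
        exact treeLE_refl (hsub β' hβ).1
  refine ⟨α', β', (key β' hβ).1, ?_⟩
  ext γ
  exact ⟨fun h => key γ h, fun ⟨h1, h2⟩ => hconv α' β' γ hα hβ h1 h2⟩

/-- The collection `𝒮` of finite intervals of `ℕ` together with finite
segments of the dyadic tree is closed under pairwise intersections. -/
theorem stmt6 (A B : Set ℕ)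
    (hA : IsNatInterval A ∨ IsTreeSegment A)
    (hB : IsNatInterval B ∨ IsTreeSegment B) :
    IsNatInterval (A ∩ B) ∨ IsTreeSegment (A ∩ B) := by
  rcases Set.eq_empty_or_nonempty (A ∩ B) with hE | hne
  · left
    exact ⟨1, 0, by rw [hE, Set.Icc_eq_empty (by norm_num)]⟩
  rcases hA with ⟨a, b, rfl⟩ | ⟨α₁, β₁, hαβ₁, rfl⟩
  · rcases hB with ⟨c, d, rfl⟩ | ⟨α₂, β₂, hαβ₂, rfl⟩
    · left
      exact ⟨max a c, min b d, Set.Icc_inter_Icc⟩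
    · right
      refine segment_of_chain (β := β₂) (fun γ hγ => hγ.2.2) ?_ hne
      rintro γ1 γ2 γ ⟨hI1, hT1⟩ ⟨hI2, hT2⟩ h1 h2
      refine ⟨⟨le_trans hI1.1 (treeLE_le h1), le_trans (treeLE_le h2) hI2.2⟩,
        treeLE_trans hT1.1 h1, treeLE_trans h2 hT2.2⟩
  · rcases hB with ⟨c, d, rfl⟩ | ⟨α₂, β₂, hαβ₂, rfl⟩
    · right
      refine segment_of_chain (β := β₁) (fun γ hγ => hγ.1.2) ?_ hne
      rintro γ1 γ2 γ ⟨hT1, hI1⟩ ⟨hT2, hI2⟩ h1 h2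
      refine ⟨⟨treeLE_trans hT1.1 h1, treeLE_trans h2 hT2.2⟩,
        le_trans hI1.1 (treeLE_le h1), le_trans (treeLE_le h2) hI2.2⟩
    · right
      refine segment_of_chain (β := β₁) (fun γ hγ => hγ.1.2) ?_ hne
      rintro γ1 γ2 γ ⟨hT1, hU1⟩ ⟨hT2, hU2⟩ h1 h2
      exact ⟨⟨treeLE_trans hT1.1 h1, treeLE_trans h2 hT2.2⟩,
        treeLE_trans hU1.1 h1, treeLE_trans h2 hU2.2⟩
end

section
/- Suppose in the space 𝔛_D (with norming set D closed under coordinatewise products) that f ∈ M is a product f = f_1·...·f_r of weighted functionals f_i ∈ K with weights w(f_i) = m_{j_i}, where each f_i can be written as (1/m_{j_i}) times a sum of at most n_{j_i} successive elements of D. Then f can be written as f = (1/w(f)) ∑_{i=1}^d h_i with h_1 < ... < h_d in D and d ≤ n_{j_1} + ... + n_{j_r} - (r-1), where w(f) = m_{j_1}·...·m_{j_r}. -/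
open Finset

/-- `F 0 < F 1 < ⋯ < F (d-1)` are successively supported functionals. -/
def SuccBlocks (F : ℕ → (ℕ → ℝ)) (d : ℕ) : Prop :=
  ∀ i j, i < j → j < d → ∀ k l, F i k ≠ 0 → F j l ≠ 0 → k < l

lemma merge_two {D : Set (ℕ → ℝ)}
    (hDprod : ∀ p ∈ D, ∀ q ∈ D, (fun k => p k * q k) ∈ D)
    {g g' : ℕ → ℕ → ℝ} {d d' : ℕ} (hd' : 1 ≤ d')
    (hgD : ∀ t < d, g t ∈ D) (hg'D : ∀ t < d', g' t ∈ D)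
    (hg : SuccBlocks g d) (hg' : SuccBlocks g' d') :
    ∃ (e : ℕ) (h : ℕ → ℕ → ℝ), e + 1 ≤ d + d' ∧ (∀ t < e, h t ∈ D) ∧ SuccBlocks h e ∧
      ∀ k, (∑ t ∈ range d, g t k) * (∑ t ∈ range d', g' t k) = ∑ t ∈ range e, h t k := by
  classical
  set S : Finset (ℕ × ℕ) := (range d ×ˢ range d').filter
    (fun p => ∃ k, g p.1 k ≠ 0 ∧ g' p.2 k ≠ 0) with hS
  have hchain : ∀ p ∈ S, ∀ q ∈ S, p.1 < q.1 → p.2 ≤ q.2 := by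
    intro p hp q hq h1
    simp only [hS, mem_filter, mem_product, mem_range] at hp hq
    obtain ⟨⟨hp1, hp2⟩, k, hk1, hk2⟩ := hp
    obtain ⟨⟨hq1, hq2⟩, l, hl1, hl2⟩ := hq
    by_contra hlt
    push_neg at hlt
    have h2 := hg p.1 q.1 h1 hq1 k l hk1 hl1
    have h3 := hg' q.2 p.2 hlt hp2 l k hl2 hk2
    omega
  have hinj : Set.InjOn (fun p : ℕ × ℕ => p.1 + p.2) S := by
    intro p hp q hq hpq
    simp only at hpq
    rcases lt_trichotomy p.1 q.1 with h | h | h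
    · have := hchain p hp q hq h; omega
    · have : p.2 = q.2 := by omega
      exact Prod.ext h this
    · have := hchain q hq p hp h; omega
  set A := S.image (fun p => p.1 + p.2) with hA
  have hcard : A.card = S.card := Finset.card_image_of_injOn hinj
  set e := S.card with he
  let iso := A.orderIsoOfFin (by rw [hcard])
  have hspec : ∀ v : Fin e, ∃ p, p ∈ S ∧ p.1 + p.2 = (iso v : ℕ) := by
    intro v
    obtain ⟨p, hp, hpe⟩ := mem_image.mp (iso v).2
    exact ⟨p, hp, hpe⟩
  set P : ℕ → ℕ × ℕ := fun v =>
    if hv : v < e then Classical.choose (hspec ⟨v, hv⟩) else (0, 0) with hPdef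
  have hP : ∀ v (hv : v < e), P v ∈ S ∧ (P v).1 + (P v).2 = (iso ⟨v, hv⟩ : ℕ) := by
    intro v hv
    have : P v = Classical.choose (hspec ⟨v, hv⟩) := dif_pos hv
    rw [this]
    exact Classical.choose_spec (hspec ⟨v, hv⟩)
  have hPmem : ∀ v (hv : v < e), (P v).1 < d ∧ (P v).2 < d' := by
    intro v hv
    have h1 := mem_product.mp (mem_filter.mp (hP v hv).1).1
    simpa [mem_range] using h1
  refine ⟨e, fun v k => g (P v).1 k * g' (P v).2 k, ?_, ?_, ?_, ?_⟩
  · rcases S.eq_empty_or_nonempty with hSe | ⟨p, hp⟩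
    · simp only [he, hSe, card_empty]; omega
    · have hmem := mem_product.mp (mem_filter.mp hp).1
      simp only [mem_range] at hmem
      have hsub : A ⊆ range (d + d' - 1) := by
        intro a ha
        obtain ⟨q, hq, rfl⟩ := mem_image.mp ha
        have hq2 := mem_product.mp (mem_filter.mp hq).1
        simp only [mem_range] at hq2
        simp only [mem_range]; omega
      have hc := Finset.card_le_card hsub
      rw [hcard, card_range] at hc
      omega
  · intro t ht
    have h1 := hPmem t ht
    exact hDprod _ (hgD _ h1.1) _ (hg'D _ h1.2)
  · intro v w hvw hwe k l hk hl
    have hve := hvw.trans hwe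
    obtain ⟨hk1, hk2⟩ := mul_ne_zero_iff.mp hk
    obtain ⟨hl1, hl2⟩ := mul_ne_zero_iff.mp hl
    have hsum : (P v).1 + (P v).2 < (P w).1 + (P w).2 := by
      rw [(hP v hve).2, (hP w hwe).2]
      exact iso.strictMono (show (⟨v, hve⟩ : Fin e) < ⟨w, hwe⟩ from hvw)
    have hcmp := hchain _ (hP v hve).1 _ (hP w hwe).1
    have hcases : (P v).1 < (P w).1 ∨ (P v).2 < (P w).2 := by omega
    have hm1 := hPmem w hwe
    rcases hcases with hc | hc
    · exact hg _ _ hc hm1.1 k l hk1 hl1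
    · exact hg' _ _ hc hm1.2 k l hk2 hl2
  · intro k
    have step2 : ∑ v : Fin e, g (P v).1 k * g' (P v).2 k
        = ∑ p ∈ S, g p.1 k * g' p.2 k := by
      apply Finset.sum_bij (fun (v : Fin e) _ => P v)
      · intro v _; exact (hP v v.isLt).1
      · intro v _ w _ hvw
        have h1 : (iso v : ℕ) = (iso w : ℕ) := by
          rw [← (hP v v.isLt).2, ← (hP w w.isLt).2, hvw]
        have := iso.injective (Subtype.ext h1)
        simpa [Fin.eta] using this
      · intro p hp
        have h1 : p.1 + p.2 ∈ A := mem_image_of_mem _ hp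
        obtain ⟨v, hv⟩ := iso.surjective ⟨_, h1⟩
        refine ⟨v, mem_univ v, hinj (hP v v.isLt).1 hp ?_⟩
        simp only [(hP v v.isLt).2, Fin.eta, hv]
      · intro v _; rfl
    have step3 : ∑ p ∈ S, g p.1 k * g' p.2 k
        = ∑ p ∈ range d ×ˢ range d', g p.1 k * g' p.2 k := by
      apply Finset.sum_subset (filter_subset _ _)
      intro p hp hpn
      rw [mem_filter] at hpn
      push_neg at hpn
      have h1 := hpn hp
      by_cases h2 : g p.1 k = 0
      · rw [h2, zero_mul]
      · rw [h1 k h2, mul_zero]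
    rw [← Fin.sum_univ_eq_sum_range (fun v => g (P v).1 k * g' (P v).2 k) e,
      step2, step3, Finset.sum_product, Finset.sum_mul_sum]

lemma merge_many {D : Set (ℕ → ℝ)}
    (hDprod : ∀ p ∈ D, ∀ q ∈ D, (fun k => p k * q k) ∈ D) :
    ∀ (r : ℕ), 1 ≤ r → ∀ (ds : Fin r → ℕ) (g : Fin r → ℕ → ℕ → ℝ),
    (∀ i, 1 ≤ ds i) → (∀ i, ∀ t < ds i, g i t ∈ D) → (∀ i, SuccBlocks (g i) (ds i)) →
    ∃ (e : ℕ) (h : ℕ → ℕ → ℝ), e + r ≤ (∑ i, ds i) + 1 ∧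
      (∀ t < e, h t ∈ D) ∧ SuccBlocks h e ∧
      ∀ k, ∏ i, (∑ t ∈ range (ds i), g i t k) = ∑ t ∈ range e, h t k := by
  intro r
  induction r with
  | zero => omega
  | succ r ih =>
    intro _ ds g hds hgD hgS
    rcases Nat.eq_zero_or_pos r with hr0 | hr1
    · subst hr0
      refine ⟨ds 0, g 0, by simp [Fin.sum_univ_one], fun t ht => hgD 0 t ht, hgS 0, ?_⟩
      intro k
      simp [Fin.prod_univ_one]
    · obtain ⟨e, h, hbound, hD, hSucc, hsum⟩ := ih hr1 (fun i => ds i.castSucc)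
        (fun i => g i.castSucc) (fun i => hds _) (fun i => hgD _) (fun i => hgS _)
      obtain ⟨e', h', hbound', hD', hSucc', hsum'⟩ := merge_two hDprod
        (hds (Fin.last r)) hD (hgD (Fin.last r)) hSucc (hgS (Fin.last r))
      refine ⟨e', h', ?_, hD', hSucc', ?_⟩
      · rw [Fin.sum_univ_castSucc]
        omega
      · intro k
        rw [Fin.prod_univ_castSucc, hsum, hsum']

/-- Suppose `D ⊆ c₀₀(ℕ)` is closed under coordinatewise products and under
restriction to intervals, and `f = f_1 ⋯ f_r` is a coordinatewise product of
weighted functionals `f_i = (1/m_{j_i})(g_1 + ⋯ + g_{d_i})` with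
`g_1 < ⋯ < g_{d_i}` in `D` and `d_i ≤ n_{j_i}`.  Then
`f = (1/(m_{j_1}⋯m_{j_r})) ∑_{t<d} h_t` with `h_0 < ⋯ < h_{d-1}` in `D` and
`d ≤ n_{j_1} + ⋯ + n_{j_r} - (r-1)`. -/
theorem stmt12 (D : Set (ℕ → ℝ))
    (hDprod : ∀ p ∈ D, ∀ q ∈ D, (fun k => p k * q k) ∈ D)
    (hDrestr : ∀ p ∈ D, ∀ a b : ℕ,
      (fun k => if k ∈ Finset.Icc a b then p k else 0) ∈ D)
    (n m : ℕ → ℕ) (r : ℕ) (hr : 1 ≤ r) (js : Fin r → ℕ)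
    (hm : ∀ i, 1 ≤ m (js i))
    (fi : Fin r → (ℕ → ℝ))
    (hfi : ∀ i : Fin r, ∃ (di : ℕ) (g : ℕ → (ℕ → ℝ)),
      1 ≤ di ∧ di ≤ n (js i) ∧ (∀ t < di, g t ∈ D) ∧ SuccBlocks g di ∧
      fi i = (1 / (m (js i) : ℝ)) • ∑ t ∈ range di, g t) :
    ∃ (d : ℕ) (h : ℕ → (ℕ → ℝ)),
      d ≤ (∑ i, n (js i)) - (r - 1) ∧
      (∀ t < d, h t ∈ D) ∧ SuccBlocks h d ∧
      (fun k => ∏ i, fi i k) =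
        (1 / ∏ i, (m (js i) : ℝ)) • ∑ t ∈ range d, h t := by
  classical
  choose di g h1 h2 h3 h4 h5 using hfi
  obtain ⟨e, h, hbound, hD, hSucc, hsum⟩ := merge_many hDprod r hr di g h1 h3 h4
  have hdn : ∑ i, di i ≤ ∑ i, n (js i) := Finset.sum_le_sum fun i _ => h2 i
  refine ⟨e, h, by omega, hD, hSucc, ?_⟩
  funext k
  have hfik : ∀ i, fi i k = (1 / (m (js i) : ℝ)) * ∑ t ∈ range (di i), g i t k := by
    intro i
    rw [h5 i]
    simp [Finset.sum_apply]
  simp only [Pi.smul_apply, Finset.sum_apply, smul_eq_mul]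
  rw [Finset.prod_congr rfl (fun i _ => hfik i), Finset.prod_mul_distrib, hsum k]
  congr 1
  simp [one_div, Finset.prod_inv_distrib]
end

section
/- Let X be a Banach space with normalized monotone Schauder basis (e_n) dominating the summing basis with constant C_1 and with submultiplicative dual norm with constant C_2 (on finitely supported functionals). Then for every w*-convergent series x* = w*-∑ λ_n e_n^* in X^*, the diagonal operator T with T e_n = λ_n e_n satisfies C_1·‖x*‖ ≤ ‖T‖ ≤ C_2·‖x*‖. -/
open Finset Filter

/-- Let `X` have a normalized monotone Schauder basis `(e n)` dominating the
summing basis with constant `C₁ > 0`, with submultiplicative dual norm with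
constant `C₂`.  If `x* = w*-∑ λ_n e_n^*` and `T` is the diagonal operator
with `T e_n = λ_n e_n`, then `C₁ ‖x*‖ ≤ ‖T‖ ≤ C₂ ‖x*‖`. -/
theorem stmt14 {X : Type*} [NormedAddCommGroup X] [NormedSpace ℝ X] [CompleteSpace X]
    (e : ℕ → X) (es : ℕ → X →L[ℝ] ℝ) (C₁ C₂ : ℝ) (hC₁ : 0 < C₁) (hC₂ : 0 < C₂)
    (hbi : ∀ n m, es n (e m) = if n = m then 1 else 0)
    (hnormal : ∀ n, ‖e n‖ = 1)
    (hmono : ∀ (x : X) (n : ℕ), ‖∑ i ∈ range n, es i x • e i‖ ≤ ‖x‖)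
    (hexp : ∀ x : X,
      Tendsto (fun n => ∑ i ∈ range n, es i x • e i) atTop (nhds x))
    (hdom : ∀ (n : ℕ) (μ : ℕ → ℝ),
      C₁ * |∑ i ∈ range n, μ i| ≤ ‖∑ i ∈ range n, μ i • e i‖)
    (hsub : ∀ (n : ℕ) (a b : ℕ → ℝ),
      ‖∑ i ∈ range n, (a i * b i) • es i‖ ≤
        C₂ * ‖∑ i ∈ range n, a i • es i‖ * ‖∑ i ∈ range n, b i • es i‖)
    (lam : ℕ → ℝ) (xstar : X →L[ℝ] ℝ)
    -- `xstar` is the w*-sum of the series `∑ λ_n e_n^*`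
    (hxstar : ∀ x : X,
      Tendsto (fun N => ∑ i ∈ range N, lam i * es i x) atTop (nhds (xstar x)))
    (T : X →L[ℝ] X) (hT : ∀ k, T (e k) = lam k • e k) :
    C₁ * ‖xstar‖ ≤ ‖T‖ ∧ ‖T‖ ≤ C₂ * ‖xstar‖ := by
  -- evaluation of coordinate functionals on partial sums
  have hesP : ∀ (y : X) (n j : ℕ), es j (∑ i ∈ range n, es i y • e i)
      = if j ∈ range n then es j y else 0 := by
    intro y n j
    rw [map_sum]
    simp only [map_smul, smul_eq_mul, hbi, mul_ite, mul_one, mul_zero]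
    rw [Finset.sum_ite_eq]
  -- coordinates of T x
  have heTx : ∀ (x : X) (i : ℕ), es i (T x) = lam i * es i x := by
    intro x i
    have h1 : Tendsto (fun n => es i (T (∑ j ∈ range n, es j x • e j))) atTop
        (nhds (es i (T x))) :=
      (((es i).comp T).continuous.tendsto x).comp (hexp x)
    have h2 : ∀ᶠ n in atTop,
        es i (T (∑ j ∈ range n, es j x • e j)) = lam i * es i x := by
      filter_upwards [eventually_ge_atTop (i + 1)] with n hn
      have hTsum : T (∑ j ∈ range n, es j x • e j)
          = ∑ j ∈ range n, es j x • (lam j • e j) := by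
        rw [map_sum]; simp only [map_smul, hT]
      rw [hTsum, map_sum]
      simp only [map_smul, smul_eq_mul, hbi, mul_ite, mul_one, mul_zero]
      have hmem : i ∈ range n := mem_range.2 (Nat.lt_of_succ_le hn)
      rw [Finset.sum_eq_single i]
      · simp [mul_comm, mul_assoc]
      · intro b _ hbne; simp [Ne.symm hbne]
      · intro h; exact absurd hmem h
    exact tendsto_nhds_unique (h1.congr' h2) tendsto_const_nhds
  -- xstar evaluated on partial sums
  have hxP : ∀ (y : X) (n : ℕ),
      xstar (∑ i ∈ range n, es i y • e i) = ∑ i ∈ range n, lam i * es i y := by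
    intro y n
    have h2 : ∀ᶠ N in atTop,
        ∑ j ∈ range N, lam j * es j (∑ i ∈ range n, es i y • e i)
          = ∑ i ∈ range n, lam i * es i y := by
      filter_upwards [eventually_ge_atTop n] with N hN
      rw [← Finset.sum_subset (Finset.range_subset_range.2 hN)
        (f := fun j => lam j * es j (∑ i ∈ range n, es i y • e i))]
      · exact Finset.sum_congr rfl fun j hj => by rw [hesP, if_pos hj]
      · intro j _ hj
        rw [hesP, if_neg hj, mul_zero]
    exact tendsto_nhds_unique ((hxstar _).congr' h2) tendsto_const_nhds
  -- partial sums of xstar are dominated by ‖xstar‖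
  have hPs : ∀ n : ℕ, ‖∑ i ∈ range n, lam i • es i‖ ≤ ‖xstar‖ := by
    intro n
    apply ContinuousLinearMap.opNorm_le_bound _ (norm_nonneg xstar)
    intro y
    have hval : (∑ i ∈ range n, lam i • es i) y
        = xstar (∑ i ∈ range n, es i y • e i) := by
      rw [hxP]
      simp [ContinuousLinearMap.sum_apply]
    rw [hval]
    calc |xstar (∑ i ∈ range n, es i y • e i)|
        ≤ ‖xstar‖ * ‖∑ i ∈ range n, es i y • e i‖ := xstar.le_opNorm _
      _ ≤ ‖xstar‖ * ‖y‖ := by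
          exact mul_le_mul_of_nonneg_left (hmono y n) (norm_nonneg _)
  -- lower bound
  have hlow : C₁ * ‖xstar‖ ≤ ‖T‖ := by
    have hbd : ∀ x : X, |xstar x| ≤ ‖T‖ / C₁ * ‖x‖ := by
      intro x
      have key : ∀ n : ℕ, C₁ * |∑ i ∈ range n, lam i * es i x| ≤ ‖T‖ * ‖x‖ := by
        intro n
        calc C₁ * |∑ i ∈ range n, lam i * es i x|
            ≤ ‖∑ i ∈ range n, (lam i * es i x) • e i‖ := hdom n _
          _ = ‖∑ i ∈ range n, es i (T x) • e i‖ := by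
              simp only [heTx]
          _ ≤ ‖T x‖ := hmono (T x) n
          _ ≤ ‖T‖ * ‖x‖ := T.le_opNorm x
      have hlim : Tendsto (fun n => C₁ * |∑ i ∈ range n, lam i * es i x|) atTop
          (nhds (C₁ * |xstar x|)) :=
        (tendsto_const_nhds.mul ((hxstar x).abs))
      have := le_of_tendsto hlim (Filter.Eventually.of_forall key)
      rw [div_mul_eq_mul_div, le_div_iff₀ hC₁]
      linarith [this, mul_comm |xstar x| C₁]
    have hx : ‖xstar‖ ≤ ‖T‖ / C₁ :=
      ContinuousLinearMap.opNorm_le_bound _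
        (div_nonneg (norm_nonneg T) hC₁.le) fun x => hbd x
    calc C₁ * ‖xstar‖ ≤ C₁ * (‖T‖ / C₁) :=
          mul_le_mul_of_nonneg_left hx hC₁.le
      _ = ‖T‖ := by field_simp
  -- upper bound
  have hupp : ‖T‖ ≤ C₂ * ‖xstar‖ := by
    apply ContinuousLinearMap.opNorm_le_bound _
      (mul_nonneg hC₂.le (norm_nonneg xstar))
    intro x
    have hpart : ∀ n : ℕ,
        ‖∑ i ∈ range n, es i (T x) • e i‖ ≤ C₂ * ‖xstar‖ * ‖x‖ := by
      intro n
      set v := ∑ i ∈ range n, es i (T x) • e i with hv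
      by_cases hv0 : v = 0
      · rw [hv0, norm_zero]
        positivity
      obtain ⟨f, hf1, hfv⟩ := exists_dual_vector ℝ v (norm_ne_zero_iff.2 hv0)
      have hfb : ‖∑ i ∈ range n, (f (e i)) • es i‖ ≤ 1 := by
        apply ContinuousLinearMap.opNorm_le_bound _ zero_le_one
        intro y
        have : (∑ i ∈ range n, (f (e i)) • es i) y
            = f (∑ i ∈ range n, es i y • e i) := by
          rw [map_sum]
          simp [ContinuousLinearMap.sum_apply, mul_comm]
        rw [this]
        calc |f (∑ i ∈ range n, es i y • e i)|
            ≤ ‖f‖ * ‖∑ i ∈ range n, es i y • e i‖ := f.le_opNorm _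
          _ ≤ 1 * ‖y‖ := by
              rw [hf1]; exact mul_le_mul_of_nonneg_left (hmono y n) zero_le_one
      have hfveq : f v = ∑ i ∈ range n, (lam i * f (e i)) * es i x := by
        rw [hv, map_sum]
        apply Finset.sum_congr rfl
        intro i _
        rw [map_smul, smul_eq_mul, heTx]
        ring
      have : ‖v‖ = f v := by
        rw [hfv]; simp
      rw [this, hfveq]
      have happ : |∑ i ∈ range n, (lam i * f (e i)) * es i x|
          ≤ ‖∑ i ∈ range n, (lam i * f (e i)) • es i‖ * ‖x‖ := by
        have := (∑ i ∈ range n, (lam i * f (e i)) • es i).le_opNorm x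
        simpa [ContinuousLinearMap.sum_apply] using this
      calc ∑ i ∈ range n, (lam i * f (e i)) * es i x
          ≤ |∑ i ∈ range n, (lam i * f (e i)) * es i x| := le_abs_self _
        _ ≤ ‖∑ i ∈ range n, (lam i * f (e i)) • es i‖ * ‖x‖ := happ
        _ ≤ (C₂ * ‖∑ i ∈ range n, lam i • es i‖ * ‖∑ i ∈ range n, (f (e i)) • es i‖) * ‖x‖ := by
            exact mul_le_mul_of_nonneg_right (hsub n lam (fun i => f (e i))) (norm_nonneg x)
        _ ≤ (C₂ * ‖xstar‖ * 1) * ‖x‖ := by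
            apply mul_le_mul_of_nonneg_right _ (norm_nonneg x)
            apply mul_le_mul (mul_le_mul_of_nonneg_left (hPs n) hC₂.le) hfb
              (norm_nonneg _) (by positivity)
        _ = C₂ * ‖xstar‖ * ‖x‖ := by ring
    have hlim : Tendsto (fun n => ‖∑ i ∈ range n, es i (T x) • e i‖) atTop
        (nhds ‖T x‖) := (continuous_norm.tendsto _).comp (hexp (T x))
    exact le_of_tendsto hlim (Filter.Eventually.of_forall hpart)
  exact ⟨hlow, hupp⟩
end

section
/- Let X be a Banach space with a Schauder basis (e_n) whose dual ball satisfies B_{X^*}·B_{X^*} ⊆ B_{X^*} under coordinatewise products and which contains ±∑_{i=1}^n e_i^* for all n (normalized so C_1 = C_2 = 1). Then a series ∑ a_i e_i^* converges in norm in X^* if and only if the corresponding diagonal operator ∑ a_i e_i^* ⊗ e_i converges in operator norm, i.e. compact diagonal operators correspond exactly to the norm-closed span of the biorthogonal functionals. -/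
open Finset Filter

private lemma key_norm_eq {X : Type*} [NormedAddCommGroup X] [NormedSpace ℝ X]
    (e : ℕ → X) (es : ℕ → X →L[ℝ] ℝ)
    (hbi : ∀ n m, es n (e m) = if n = m then 1 else 0)
    (hsumball : ∀ N : ℕ, ‖∑ i ∈ range N, es i‖ ≤ 1)
    (hball : ∀ f g h : X →L[ℝ] ℝ, ‖f‖ ≤ 1 → ‖g‖ ≤ 1 →
      (∀ k, h (e k) = f (e k) * g (e k)) → ‖h‖ ≤ 1)
    (a : ℕ → ℝ) (F : Finset ℕ) :
    ‖∑ i ∈ F, a i • (es i).smulRight (e i)‖ = ‖∑ i ∈ F, a i • es i‖ := by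
  set f : X →L[ℝ] ℝ := ∑ i ∈ F, a i • es i with hf
  set T : X →L[ℝ] X := ∑ i ∈ F, a i • (es i).smulRight (e i) with hT
  have hfx : ∀ x, f x = ∑ i ∈ F, a i * es i x := by
    intro x; simp [hf, ContinuousLinearMap.sum_apply, smul_eq_mul]
  have hTx : ∀ x, T x = ∑ i ∈ F, (a i * es i x) • e i := by
    intro x; simp [hT, ContinuousLinearMap.sum_apply, smul_smul]
  have hfe : ∀ k, f (e k) = if k ∈ F then a k else 0 := by
    intro k
    rw [hfx]
    by_cases hk : k ∈ F
    · rw [Finset.sum_eq_single k ?_ ?_]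
      · simp [hbi, hk]
      · intro i _ hik; simp [hbi, hik]
      · intro h; exact absurd hk h
    · simp only [hk, if_false]
      apply Finset.sum_eq_zero
      intro i hi
      have hik : i ≠ k := fun h => hk (h ▸ hi)
      simp [hbi, hik]
  apply le_antisymm
  · -- ‖T‖ ≤ ‖f‖
    apply ContinuousLinearMap.opNorm_le_bound _ (norm_nonneg f)
    intro x
    obtain ⟨g, hg1, hgTx⟩ := exists_dual_vector'' ℝ (T x)
    set h : X →L[ℝ] ℝ := ∑ i ∈ F, (a i * g (e i)) • es i with hh
    have hhx : ∀ y, h y = ∑ i ∈ F, a i * g (e i) * es i y := by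
      intro y; simp [hh, ContinuousLinearMap.sum_apply, smul_eq_mul]
    have hhe : ∀ k, h (e k) = f (e k) * g (e k) := by
      intro k
      rw [hhx, hfe]
      by_cases hk : k ∈ F
      · rw [Finset.sum_eq_single k ?_ ?_]
        · simp [hbi, hk, mul_comm]
        · intro i _ hik; simp [hbi, hik]
        · intro h; exact absurd hk h
      · simp only [hk, if_false, zero_mul]
        apply Finset.sum_eq_zero
        intro i hi
        have hik : i ≠ k := fun h => hk (h ▸ hi)
        simp [hbi, hik]
    have hgT : g (T x) = h x := by
      rw [hTx, hhx, map_sum]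
      apply Finset.sum_congr rfl
      intro i _
      rw [map_smul]
      simp [smul_eq_mul]; ring
    have hnh : ‖h‖ ≤ ‖f‖ := by
      rcases eq_or_ne ‖f‖ 0 with h0 | h0
      · have hf0 : f = 0 := norm_eq_zero.mp h0
        have ha0 : ∀ i ∈ F, a i = 0 := by
          intro i hi
          have := hfe i
          simp [hf0, hi] at this
          exact this.symm
        have hh0 : h = 0 := by
          rw [hh]
          apply Finset.sum_eq_zero
          intro i hi
          simp [ha0 i hi]
        simp [hh0, h0]
      · have hfpos : 0 < ‖f‖ := lt_of_le_of_ne (norm_nonneg f) (Ne.symm h0)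
        have hb := hball (‖f‖⁻¹ • f) g (‖f‖⁻¹ • h)
          (by rw [norm_smul (‖f‖⁻¹) f, norm_inv, norm_norm, inv_mul_cancel₀ h0])
          hg1
          (by intro k; simp [hhe k]; ring)
        rw [norm_smul (‖f‖⁻¹) h, norm_inv, norm_norm] at hb
        calc ‖h‖ = ‖f‖ * (‖f‖⁻¹ * ‖h‖) := by field_simp
          _ ≤ ‖f‖ * 1 := by
              apply mul_le_mul_of_nonneg_left _ (le_of_lt hfpos)
              exact hb
          _ = ‖f‖ := mul_one _
    calc ‖T x‖ = g (T x) := hgTx.symm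
      _ = h x := hgT
      _ ≤ ‖h x‖ := le_abs_self _
      _ ≤ ‖h‖ * ‖x‖ := h.le_opNorm x
      _ ≤ ‖f‖ * ‖x‖ := mul_le_mul_of_nonneg_right hnh (norm_nonneg x)
  · -- ‖f‖ ≤ ‖T‖
    apply ContinuousLinearMap.opNorm_le_bound _ (norm_nonneg T)
    intro x
    obtain ⟨N, hN⟩ := F.exists_nat_subset_range
    set S : X →L[ℝ] ℝ := ∑ k ∈ range N, es k with hS
    have hSTx : S (T x) = f x := by
      have h1 : ∀ k, es k (T x) = ∑ i ∈ F, (a i * es i x) * es k (e i) := by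
        intro k
        rw [hTx, map_sum]
        apply Finset.sum_congr rfl
        intro i _
        rw [map_smul]; simp [smul_eq_mul]
      simp only [hS, ContinuousLinearMap.sum_apply]
      rw [Finset.sum_congr rfl (fun k _ => h1 k), Finset.sum_comm, hfx]
      apply Finset.sum_congr rfl
      intro i hi
      rw [← Finset.mul_sum]
      have h2 : ∑ k ∈ range N, es k (e i) = 1 := by
        simp only [hbi]
        rw [Finset.sum_ite_eq' (range N) i (fun _ => (1 : ℝ))]
        simp [hN hi]
      rw [h2, mul_one]
    calc ‖f x‖ = ‖S (T x)‖ := by rw [hSTx]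
      _ ≤ ‖S‖ * ‖T x‖ := S.le_opNorm _
      _ ≤ 1 * ‖T x‖ := mul_le_mul_of_nonneg_right (hsumball N) (norm_nonneg _)
      _ = ‖T x‖ := one_mul _
      _ ≤ ‖T‖ * ‖x‖ := T.le_opNorm x

/-- Let `X` have a normalized monotone Schauder basis `(e n)` such that the
dual unit ball is closed under coordinatewise products and contains
`±∑_{i<N} e_i^*` for all `N`.  Then a series `∑ a_i e_i^*` converges in norm
in `X^*` iff the corresponding series of rank-one diagonal operators
`∑ a_i e_i^* ⊗ e_i` converges in operator norm; i.e. compact diagonal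
operators correspond exactly to the norm-closed span of the biorthogonal
functionals. -/
theorem stmt15 {X : Type*} [NormedAddCommGroup X] [NormedSpace ℝ X] [CompleteSpace X]
    (e : ℕ → X) (es : ℕ → X →L[ℝ] ℝ)
    (hbi : ∀ n m, es n (e m) = if n = m then 1 else 0)
    (hnormal : ∀ n, ‖e n‖ = 1)
    (hmono : ∀ (x : X) (n : ℕ), ‖∑ i ∈ range n, es i x • e i‖ ≤ ‖x‖)
    (hexp : ∀ x : X,
      Tendsto (fun n => ∑ i ∈ range n, es i x • e i) atTop (nhds x))
    -- the dual ball contains `± ∑_{i<N} e_i^*` (normalization `C₁ = 1`)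
    (hsumball : ∀ N : ℕ, ‖∑ i ∈ range N, es i‖ ≤ 1)
    -- `B_{X^*} · B_{X^*} ⊆ B_{X^*}` for coordinatewise products
    -- (normalization `C₂ = 1`)
    (hball : ∀ f g h : X →L[ℝ] ℝ, ‖f‖ ≤ 1 → ‖g‖ ≤ 1 →
      (∀ k, h (e k) = f (e k) * g (e k)) → ‖h‖ ≤ 1) :
    ∀ a : ℕ → ℝ,
      CauchySeq (fun N => ∑ i ∈ range N, a i • es i) ↔
      CauchySeq (fun N => ∑ i ∈ range N, a i • (es i).smulRight (e i)) := by
  intro a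
  set u : ℕ → (X →L[ℝ] ℝ) := fun N => ∑ i ∈ range N, a i • es i with hu
  set v : ℕ → (X →L[ℝ] X) := fun N => ∑ i ∈ range N, a i • (es i).smulRight (e i) with hv
  have key : ∀ M N : ℕ, M ≤ N → dist (u N) (u M) = dist (v N) (v M) := by
    intro M N hMN
    rw [dist_eq_norm, dist_eq_norm, hu, hv]
    have h1 : (∑ i ∈ range N, a i • es i) - (∑ i ∈ range M, a i • es i)
        = ∑ i ∈ Ico M N, a i • es i := by
      rw [Finset.sum_Ico_eq_sub _ hMN]
    have h2 : (∑ i ∈ range N, a i • (es i).smulRight (e i))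
        - (∑ i ∈ range M, a i • (es i).smulRight (e i))
        = ∑ i ∈ Ico M N, a i • (es i).smulRight (e i) := by
      rw [Finset.sum_Ico_eq_sub _ hMN]
    simp only [h1, h2]
    exact (key_norm_eq e es hbi hsumball hball a (Ico M N)).symm
  have key' : ∀ M N : ℕ, dist (u N) (u M) = dist (v N) (v M) := by
    intro M N
    rcases le_total M N with h | h
    · exact key M N h
    · rw [dist_comm (u N), dist_comm (v N)]
      exact key N M h
  constructor
  · intro hc
    rw [Metric.cauchySeq_iff] at hc ⊢
    intro ε hε
    obtain ⟨K, hK⟩ := hc ε hε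
    exact ⟨K, fun m hm n hn => by rw [← key' n m]; exact hK m hm n hn⟩
  · intro hc
    rw [Metric.cauchySeq_iff] at hc ⊢
    intro ε hε
    obtain ⟨K, hK⟩ := hc ε hε
    exact ⟨K, fun m hm n hn => by rw [key' n m]; exact hK m hm n hn⟩
end
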